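/- Let Ω be a p-system on [n] and a_1,…,a_k a sequence built greedily so that each a_i extends {a_1,…,a_{i−1}} within Ω and the final set {a_1,…,a_k} is maximal in Ω. Suppose a monotone, subadditive cost function satisfies, for each i and for every partition class B_i ⊆ B with |B_i| ≤ p consisting of feasible single-element extensions at step i, the greedy increment bound c(G_i) − c(G_{i−1}) ≥ (1/p)·optaug(B_i | G_{i−1}). Then for every B ∈ Ω, optaug(B | G_0) ≤ (p+1)·c(G_k \ G_0). -/

import Mathlib

lemma sum_union_le_aux {E : Type*} [DecidableEq E] (c : E → ℝ) (hc : ∀ e, 0 ≤ c e)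
    (A B : Finset E) : ∑ e ∈ A ∪ B, c e ≤ ∑ e ∈ A, c e + ∑ e ∈ B, c e := by
  rw [show A ∪ B = A ∪ (B \ A) by rw [Finset.union_sdiff_self_eq_union],
    Finset.sum_union Finset.disjoint_sdiff]
  have := Finset.sum_le_sum_of_subset_of_nonneg (f := c) (Finset.sdiff_subset (s := B) (t := A)) (fun e _ _ => hc e)
  linarith

lemma sum_biUnion_le_aux {E ι : Type*} [DecidableEq E] [DecidableEq ι]
    (c : E → ℝ) (hc : ∀ e, 0 ≤ c e) (s : Finset ι) (f : ι → Finset E) :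
    ∑ e ∈ s.biUnion f, c e ≤ ∑ i ∈ s, ∑ e ∈ f i, c e := by
  induction s using Finset.induction_on with
  | empty => simp
  | insert _ _ hx ih =>
    rename_i a s
    rw [Finset.biUnion_insert, Finset.sum_insert hx]
    exact le_trans (sum_union_le_aux c hc _ _) (by linarith)

/-- greedy analysis over a `p`-system. Given a chain of online
solutions `Gs 0 ⊆ … ⊆ Gs k` and, for each `B ∈ Ω`, a CCPV-style partition of `B`
into classes `Bf i` of size at most `p` satisfying the greedy increment bound,
we get `optaug(B | Gs 0) ≤ (p+1) · c(Gs k \ Gs 0)`. -/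
theorem greedy_p_system_bound
    {E : Type*} [DecidableEq E] (n : ℕ)
    (c : E → ℝ) (hc : ∀ e, 0 ≤ c e)
    (R : Fin n → Set (Finset E))
    (hup : ∀ i, ∀ A B : Finset E, A ⊆ B → A ∈ R i → B ∈ R i)
    (hfeas : ∀ (X : Finset (Fin n)) (S : Finset E),
      ∃ F : Finset E, ∀ i ∈ X, S ∪ F ∈ R i)
    (optaug : Finset (Fin n) → Finset E → ℝ)
    (hoptaug : ∀ X S, optaug X S =
      sInf {r : ℝ | ∃ F : Finset E, (∀ i ∈ X, S ∪ F ∈ R i) ∧ r = ∑ e ∈ F, c e})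
    (Ω : Set (Finset (Fin n)))
    (p : ℕ) (hp : 1 ≤ p)
    (k : ℕ) (Gs : ℕ → Finset E) (hchain : Monotone Gs)
    (hpart : ∀ B ∈ Ω, ∃ Bf : Fin k → Finset (Fin n),
      (∀ i j : Fin k, i ≠ j → Disjoint (Bf i) (Bf j)) ∧
      Finset.univ.biUnion Bf = B ∧
      (∀ i : Fin k, (Bf i).card ≤ p) ∧
      (∀ i : Fin k, (1 / (p : ℝ)) * optaug (Bf i) (Gs i) ≤
        (∑ e ∈ Gs (i + 1), c e) - ∑ e ∈ Gs i, c e)) :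
    ∀ B ∈ Ω, optaug B (Gs 0) ≤ ((p : ℝ) + 1) * ∑ e ∈ Gs k \ Gs 0, c e := by
  intro B hB
  obtain ⟨Bf, hdisj, hcover, hcard, hbound⟩ := hpart B hB
  have hG0k : Gs 0 ⊆ Gs k := hchain (Nat.zero_le k)
  have hp' : (0:ℝ) < p := by exact_mod_cast Nat.lt_of_lt_of_le Nat.zero_lt_one hp
  have hDsum : ∑ e ∈ Gs k \ Gs 0, c e = (∑ e ∈ Gs k, c e) - ∑ e ∈ Gs 0, c e :=
    Finset.sum_sdiff_eq_sub hG0k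
  have hDnn : (0:ℝ) ≤ ∑ e ∈ Gs k \ Gs 0, c e := Finset.sum_nonneg fun e _ => hc e
  -- sum of optaugs bound
  have hsum : ∑ i : Fin k, optaug (Bf i) (Gs i) ≤ (p:ℝ) * ∑ e ∈ Gs k \ Gs 0, c e := by
    have h1 : ∀ i : Fin k, optaug (Bf i) (Gs i) ≤
        (p:ℝ) * ((∑ e ∈ Gs (i + 1), c e) - ∑ e ∈ Gs i, c e) := by
      intro i
      have h := hbound i
      have : optaug (Bf i) (Gs i) = (p:ℝ) * ((1/(p:ℝ)) * optaug (Bf i) (Gs i)) := by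
        field_simp
      rw [this]
      exact mul_le_mul_of_nonneg_left h (le_of_lt hp')
    calc ∑ i : Fin k, optaug (Bf i) (Gs i)
        ≤ ∑ i : Fin k, (p:ℝ) * ((∑ e ∈ Gs (i + 1), c e) - ∑ e ∈ Gs i, c e) :=
          Finset.sum_le_sum fun i _ => h1 i
      _ = (p:ℝ) * ∑ i : Fin k, ((∑ e ∈ Gs (i + 1), c e) - ∑ e ∈ Gs i, c e) := by
          rw [Finset.mul_sum]
      _ = (p:ℝ) * ((∑ e ∈ Gs k, c e) - ∑ e ∈ Gs 0, c e) := by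
          congr 1
          rw [Fin.sum_univ_eq_sum_range (fun i => (∑ e ∈ Gs (i + 1), c e) - ∑ e ∈ Gs i, c e)]
          exact Finset.sum_range_sub (fun i => ∑ e ∈ Gs i, c e) k
      _ = (p:ℝ) * ∑ e ∈ Gs k \ Gs 0, c e := by rw [hDsum]
  -- main epsilon argument
  have key : ∀ ε > (0:ℝ), optaug B (Gs 0) ≤ ((p:ℝ) + 1) * (∑ e ∈ Gs k \ Gs 0, c e) + ε := by
    intro ε hε
    have hchoose : ∀ i : Fin k, ∃ F : Finset E,
        (∀ j ∈ Bf i, Gs i ∪ F ∈ R j) ∧ ∑ e ∈ F, c e < optaug (Bf i) (Gs i) + ε / k := by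
      intro i
      have hk : 0 < k := i.pos
      have hεk : 0 < ε / k := by positivity
      have hne : {r : ℝ | ∃ F : Finset E, (∀ j ∈ Bf i, Gs (i:ℕ) ∪ F ∈ R j) ∧
          r = ∑ e ∈ F, c e}.Nonempty := by
        obtain ⟨F, hF⟩ := hfeas (Bf i) (Gs i)
        exact ⟨_, F, hF, rfl⟩
      obtain ⟨r, ⟨F, hF, rfl⟩, hr⟩ := Real.lt_sInf_add_pos hne hεk
      rw [← hoptaug] at hr
      exact ⟨F, hF, hr⟩
    choose Ff hFf hFc using hchoose
    set F : Finset E := (Gs k \ Gs 0) ∪ Finset.univ.biUnion Ff with hFdef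
    have hFfeas : ∀ j ∈ B, Gs 0 ∪ F ∈ R j := by
      intro j hj
      rw [← hcover] at hj
      obtain ⟨i, -, hji⟩ := Finset.mem_biUnion.mp hj
      refine hup j (Gs i ∪ Ff i) _ ?_ (hFf i j hji)
      intro e he
      rcases Finset.mem_union.mp he with h | h
      · by_cases h0 : e ∈ Gs 0
        · exact Finset.mem_union_left _ h0
        · have hek : e ∈ Gs k := hchain (Nat.le_of_lt i.isLt) h
          exact Finset.mem_union_right _ (Finset.mem_union_left _
            (Finset.mem_sdiff.mpr ⟨hek, h0⟩))
      · exact Finset.mem_union_right _ (Finset.mem_union_right _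
          (Finset.mem_biUnion.mpr ⟨i, Finset.mem_univ i, h⟩))
    have hcost : ∑ e ∈ F, c e ≤ ((p:ℝ) + 1) * (∑ e ∈ Gs k \ Gs 0, c e) + ε := by
      have h2 : ∑ e ∈ F, c e ≤ ∑ e ∈ Gs k \ Gs 0, c e +
          ∑ i : Fin k, ∑ e ∈ Ff i, c e :=
        le_trans (sum_union_le_aux c hc _ _)
          (by gcongr; exact sum_biUnion_le_aux c hc _ _)
      have h3 : ∑ i : Fin k, ∑ e ∈ Ff i, c e ≤
          ∑ i : Fin k, optaug (Bf i) (Gs i) + (k:ℝ) * (ε / k) := by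
        calc ∑ i : Fin k, ∑ e ∈ Ff i, c e
            ≤ ∑ i : Fin k, (optaug (Bf i) (Gs i) + ε / k) :=
              Finset.sum_le_sum fun i _ => le_of_lt (hFc i)
          _ = ∑ i : Fin k, optaug (Bf i) (Gs i) + (k:ℝ) * (ε / k) := by
              rw [Finset.sum_add_distrib]
              simp [Finset.card_univ, mul_comm]
      have h4 : (k:ℝ) * (ε / k) ≤ ε := by
        rcases Nat.eq_zero_or_pos k with hk0 | hk0
        · simp [hk0]; linarith
        · have : (0:ℝ) < k := by exact_mod_cast hk0
          rw [mul_div_cancel₀ _ (ne_of_gt this)]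
      nlinarith [hsum]
    have hopt : optaug B (Gs 0) ≤ ∑ e ∈ F, c e := by
      rw [hoptaug]
      refine csInf_le ⟨0, ?_⟩ ⟨F, hFfeas, rfl⟩
      rintro r ⟨F', -, rfl⟩
      exact Finset.sum_nonneg fun e _ => hc e
    linarith
  exact le_of_forall_pos_le_add key
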